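/- If E is a set of cuts closed under complementation, nested, and satisfying the finite interval condition (for A ⊂ B in E, only finitely many C ∈ E with A ⊂ C ⊂ B), then E is the set of directed edges of a tree: the graph whose directed edge set is E, with vertices defined as the maps α: E → Z₂ satisfying (a) exactly one of α(A), α(A*) equals 1, and (b) α(A)=1 and A ⊆ B imply α(B)=1, arising as ι(A) for some A ∈ E, is a tree. -/

import Mathlib

open Set

variable {V : Type*}

/-- Two sets are nested if one of the four corners is empty. -/
def Nested (A B : Set V) : Prop :=
  A ∩ B = ∅ ∨ A ∩ Bᶜ = ∅ ∨ Aᶜ ∩ B = ∅ ∨ Aᶜ ∩ Bᶜ = ∅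

/-- The map `ι(A)`, encoded as the set of `B ∈ ℰ` on which it takes the value `1`:
`ι(A)(B) = 1` iff `A ⊆ B` or `A* ⊂ B`. -/
def iotaMap (ℰ : Set (Set V)) (A : Set V) : Set (Set V) :=
  {B | B ∈ ℰ ∧ (A ⊆ B ∨ Aᶜ ⊂ B)}

/-- The vertices of the structure graph: maps arising as `ι(A)` for some `A ∈ ℰ`. -/
def TreeVert (ℰ : Set (Set V)) : Type _ :=
  {α : Set (Set V) // ∃ A ∈ ℰ, α = iotaMap ℰ A}

/-- The structure graph whose directed edge set is `ℰ`: the edge `A` joins `ι(A)` and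
`ι(A*)`. -/
def treeGraph (ℰ : Set (Set V)) : SimpleGraph (TreeVert ℰ) where
  Adj α β := α ≠ β ∧ ∃ A ∈ ℰ,
    (α.1 = iotaMap ℰ A ∧ β.1 = iotaMap ℰ Aᶜ) ∨ (β.1 = iotaMap ℰ A ∧ α.1 = iotaMap ℰ Aᶜ)
  symm := ⟨by
    rintro α β ⟨h, A, hA, hc⟩
    exact ⟨h.symm, A, hA, hc.symm⟩⟩
  loopless := ⟨fun α h => h.1 rfl⟩

/-! ### Auxiliary lemmas -/

section Aux

variable {ℰ : Set (Set V)}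

/-- Bundle of the structural hypotheses. -/
structure GoodFam (ℰ : Set (Set V)) : Prop where
  proper : ∀ A ∈ ℰ, A ≠ ∅ ∧ A ≠ univ
  cpl : ∀ A ∈ ℰ, Aᶜ ∈ ℰ
  nested : ∀ A ∈ ℰ, ∀ B ∈ ℰ, Nested A B
  fin : ∀ A ∈ ℰ, ∀ B ∈ ℰ, A ⊂ B → {C | C ∈ ℰ ∧ A ⊂ C ∧ C ⊂ B}.Finite

lemma sg_empty_of_subset_compl {A : Set V} (h : A ⊆ Aᶜ) : A = ∅ :=
  eq_empty_iff_forall_notMem.2 fun x hx => h hx hx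

lemma sg_subset_compl_of_inter {A B : Set V} (h : A ∩ B = ∅) : A ⊆ Bᶜ :=
  fun x hx hxB => eq_empty_iff_forall_notMem.1 h x ⟨hx, hxB⟩

lemma sg_compl_ssubset {A B : Set V} (h : A ⊂ B) : Bᶜ ⊂ Aᶜ :=
  ⟨compl_subset_compl.2 h.1, fun hc => h.2 (compl_subset_compl.1 hc)⟩

lemma nested_cases {A B : Set V} (h : Nested A B) :
    A ⊆ Bᶜ ∨ A ⊆ B ∨ B ⊆ A ∨ Aᶜ ⊆ B := by
  rcases h with h | h | h | h
  · exact Or.inl (sg_subset_compl_of_inter h)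
  · refine Or.inr (Or.inl ?_)
    have := sg_subset_compl_of_inter h; rwa [compl_compl] at this
  · refine Or.inr (Or.inr (Or.inl ?_))
    have := sg_subset_compl_of_inter (show B ∩ Aᶜ = ∅ by rwa [inter_comm] at h)
    rwa [compl_compl] at this
  · refine Or.inr (Or.inr (Or.inr ?_))
    exact sg_subset_compl_of_inter h |>.trans (by rw [compl_compl])

lemma self_mem_iota {A : Set V} (hA : A ∈ ℰ) : A ∈ iotaMap ℰ A := ⟨hA, Or.inl subset_rfl⟩

lemma compl_not_mem_iota (hg : GoodFam ℰ) {A : Set V} (hA : A ∈ ℰ) : Aᶜ ∉ iotaMap ℰ A := by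
  rintro ⟨-, h | h⟩
  · exact (hg.proper A hA).1 (sg_empty_of_subset_compl h)
  · exact h.2 subset_rfl

lemma not_mem_iota_compl (hg : GoodFam ℰ) {A : Set V} (hA : A ∈ ℰ) : A ∉ iotaMap ℰ Aᶜ := by
  rintro ⟨-, h | h⟩
  · have h' : Aᶜ ⊆ Aᶜᶜ := by rwa [compl_compl]
    exact (hg.proper A hA).2 (compl_empty_iff.1 (sg_empty_of_subset_compl h'))
  · rw [compl_compl] at h; exact h.2 subset_rfl

lemma iota_not_both (hg : GoodFam ℰ) {A C : Set V} (hA : A ∈ ℰ)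
    (h1 : C ∈ iotaMap ℰ A) (h2 : Cᶜ ∈ iotaMap ℰ A) : False := by
  obtain ⟨hA1, hA2⟩ := hg.proper A hA
  rcases h1.2 with h1' | h1' <;> rcases h2.2 with h2' | h2'
  · exact hA1 (eq_empty_iff_forall_notMem.2 fun x hx => (h2' hx) (h1' hx))
  · have h3 : C ⊂ A := by have := sg_compl_ssubset h2'; rwa [compl_compl, compl_compl] at this
    exact h3.2 h1'
  · exact h1'.2 (fun x hx hxA => h2' hxA hx)
  · exact hA2 (compl_empty_iff.1
      (eq_empty_iff_forall_notMem.2 fun x hx => h2'.1 hx (h1'.1 hx)))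

lemma iota_total (hg : GoodFam ℰ) {A C : Set V} (hA : A ∈ ℰ) (hC : C ∈ ℰ) :
    C ∈ iotaMap ℰ A ∨ Cᶜ ∈ iotaMap ℰ A := by
  have hCc := hg.cpl C hC
  rcases nested_cases (hg.nested A hA C hC) with h | h | h | h
  · exact Or.inr ⟨hCc, Or.inl h⟩
  · exact Or.inl ⟨hC, Or.inl h⟩
  · by_cases hEq : C = A
    · exact Or.inl ⟨hC, Or.inl (by rw [hEq])⟩
    · have hss : C ⊂ A := ⟨h, fun h' => hEq (subset_antisymm h h')⟩
      exact Or.inr ⟨hCc, Or.inr (sg_compl_ssubset hss)⟩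
  · by_cases hEq : Aᶜ = C
    · exact Or.inr ⟨hCc, Or.inl (by rw [← hEq, compl_compl])⟩
    · exact Or.inl ⟨hC, Or.inr ⟨h, fun h' => hEq (subset_antisymm h h')⟩⟩

lemma mem_iota_compl_iff (hg : GoodFam ℰ) {A D : Set V} (hA : A ∈ ℰ)
    (h1 : D ≠ A) (h2 : D ≠ Aᶜ) : D ∈ iotaMap ℰ Aᶜ ↔ D ∈ iotaMap ℰ A := by
  constructor
  · rintro ⟨hD, h | h⟩
    · exact ⟨hD, Or.inr ⟨h, fun h' => h2 (subset_antisymm h h').symm⟩⟩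
    · rw [compl_compl] at h; exact ⟨hD, Or.inl h.1⟩
  · rintro ⟨hD, h | h⟩
    · exact ⟨hD, Or.inr (by rw [compl_compl]; exact ⟨h, fun h' => h1 (subset_antisymm h' h)⟩)⟩
    · exact ⟨hD, Or.inl h.1⟩

lemma seg_finite (hg : GoodFam ℰ) {X Y : Set V} (hX : X ∈ ℰ) (hY : Y ∈ ℰ) :
    {C | C ∈ ℰ ∧ X ⊆ C ∧ C ⊆ Y}.Finite := by
  by_cases hXY : X ⊆ Y
  · by_cases hEq : X = Y
    · apply (Set.finite_singleton X).subset
      rintro C ⟨-, h1, h2⟩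
      have : C = X := subset_antisymm (by rw [hEq]; exact h2) h1
      simp [this]
    · have hfin := hg.fin X hX Y hY ⟨hXY, fun h => hEq (subset_antisymm hXY h)⟩
      apply ((hfin.insert X).insert Y).subset
      rintro C ⟨hC, h1, h2⟩
      by_cases e1 : C = Y
      · exact Or.inl e1
      by_cases e2 : C = X
      · exact Or.inr (Or.inl e2)
      · exact Or.inr (Or.inr ⟨hC, ⟨h1, fun h => e2 (subset_antisymm h h1)⟩,
          ⟨h2, fun h => e1 (subset_antisymm h2 h)⟩⟩)
  · apply Set.finite_empty.subset
    rintro C ⟨-, h1, h2⟩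
    exact absurd (h1.trans h2) hXY

lemma iota_diff_finite (hg : GoodFam ℰ) {A B : Set V} (hA : A ∈ ℰ) (hB : B ∈ ℰ) :
    (iotaMap ℰ A \ iotaMap ℰ B).Finite := by
  have hAc := hg.cpl A hA; have hBc := hg.cpl B hB
  apply Set.Finite.subset ((((seg_finite hg hA hB).union (seg_finite hg hA hBc)).union
    ((seg_finite hg hAc hB).union (seg_finite hg hAc hBc))).insert Bᶜ)
  rintro C ⟨⟨hC, hCA⟩, hCB⟩
  have hnotB : ¬ B ⊆ C := fun h => hCB ⟨hC, Or.inl h⟩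
  have h2 : C ⊆ B ∨ C ⊆ Bᶜ ∨ C = Bᶜ := by
    rcases nested_cases (hg.nested B hB C hC) with h | h | h | h
    · exact Or.inr (Or.inl (fun x hx hxB => h hxB hx))
    · exact absurd h hnotB
    · exact Or.inl h
    · by_cases e : Bᶜ = C
      · exact Or.inr (Or.inr e.symm)
      · exact absurd (⟨h, fun h' => e (subset_antisymm h h')⟩ : Bᶜ ⊂ C)
          (fun hss => hCB ⟨hC, Or.inr hss⟩)
  have hA2 : A ⊆ C ∨ Aᶜ ⊆ C := hCA.imp id fun h => h.1
  simp only [mem_insert_iff, mem_union, mem_setOf_eq]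
  tauto

lemma iota_min_eq (hg : GoodFam ℰ) {A B C : Set V} (hA : A ∈ ℰ) (hB : B ∈ ℰ)
    (hCA : C ∈ iotaMap ℰ A) (hCB : C ∉ iotaMap ℰ B)
    (hmin : ∀ D, D ∈ iotaMap ℰ A → D ∉ iotaMap ℰ B → D ⊆ C → D = C) :
    iotaMap ℰ C = iotaMap ℰ A := by
  obtain ⟨hCE, hCor⟩ := hCA
  have hsub : iotaMap ℰ A ⊆ iotaMap ℰ C := by
    rintro D ⟨hDE, hDor⟩
    rcases nested_cases (hg.nested C hCE D hDE) with h | h | h | h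
    · exfalso
      have hDCc : D ⊆ Cᶜ := fun x hx hxC => h hxC hx
      rcases hCor with h1 | h1 <;> rcases hDor with h2 | h2
      · exact (hg.proper A hA).1
          (eq_empty_iff_forall_notMem.2 fun x hx => hDCc (h2 hx) (h1 hx))
      · have h3 : Dᶜ ⊂ A := by
          have := sg_compl_ssubset h2; rwa [compl_compl] at this
        exact h3.2 (h1.trans h)
      · have h3 : Cᶜ ⊂ A := by
          have := sg_compl_ssubset h1; rwa [compl_compl] at this
        exact h3.2 (h2.trans hDCc)
      · exact (hg.proper A hA).2 (compl_empty_iff.1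
          (eq_empty_iff_forall_notMem.2 fun x hx => hDCc (h2.1 hx) (h1.1 hx)))
    · exact ⟨hDE, Or.inl h⟩
    · by_cases hEq : D = C
      · exact ⟨hDE, Or.inl hEq.ge⟩
      · have hDB : D ∈ iotaMap ℰ B := by
          by_contra hDB
          exact hEq (hmin D ⟨hDE, hDor⟩ hDB h)
        exfalso; apply hCB
        rcases hDB.2 with h2 | h2
        · exact ⟨hCE, Or.inl (h2.trans h)⟩
        · exact ⟨hCE, Or.inr ⟨h2.1.trans h, fun h' => h2.2 (h.trans h')⟩⟩
    · by_cases hEq : Cᶜ = D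
      · exact absurd (show Cᶜ ∈ iotaMap ℰ A by rw [hEq]; exact ⟨hDE, hDor⟩)
          (fun h' => iota_not_both hg hA ⟨hCE, hCor⟩ h')
      · exact ⟨hDE, Or.inr ⟨h, fun h' => hEq (subset_antisymm h h')⟩⟩
  refine subset_antisymm ?_ hsub
  rintro D hD
  by_contra hDA
  have hDc : Dᶜ ∈ iotaMap ℰ A := (iota_total hg hA hD.1).resolve_left hDA
  exact iota_not_both hg hCE hD (hsub hDc)

/-- The canonical vertex associated to `A ∈ ℰ`. -/
def vert {A : Set V} (hA : A ∈ ℰ) : TreeVert ℰ := ⟨iotaMap ℰ A, A, hA, rfl⟩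

lemma iota_compl_eq (hg : GoodFam ℰ) {C : Set V} (hC : C ∈ ℰ) :
    iotaMap ℰ Cᶜ = insert Cᶜ (iotaMap ℰ C \ {C}) := by
  have hCc := hg.cpl C hC
  ext D
  by_cases e2 : D = Cᶜ
  · subst e2
    simp only [mem_insert_iff, true_or, iff_true]
    exact self_mem_iota hCc
  by_cases e1 : D = C
  · subst e1
    simp only [mem_insert_iff, e2, false_or, mem_diff, mem_singleton_iff, not_true,
      and_false, iff_false]
    exact not_mem_iota_compl hg hC
  · simp only [mem_insert_iff, e2, false_or, mem_diff, mem_singleton_iff, e1, not_false_iff,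
      and_true]
    exact mem_iota_compl_iff hg hC e1 e2

lemma reach (hg : GoodFam ℰ) :
    ∀ n : ℕ, ∀ A B : Set V, ∀ (hA : A ∈ ℰ) (hB : B ∈ ℰ),
      ((iotaMap ℰ A \ iotaMap ℰ B) ∪ (iotaMap ℰ B \ iotaMap ℰ A)).ncard = n →
      (treeGraph ℰ).Reachable (vert hA) (vert hB) := by
  intro n
  induction n using Nat.strong_induction_on with
  | _ n IH =>
  intro A B hA hB hn
  by_cases heq : iotaMap ℰ A = iotaMap ℰ B
  · have : vert hA = vert hB := Subtype.ext heq
    rw [this]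
  have hTfin : ((iotaMap ℰ A \ iotaMap ℰ B) ∪ (iotaMap ℰ B \ iotaMap ℰ A)).Finite :=
    (iota_diff_finite hg hA hB).union (iota_diff_finite hg hB hA)
  have hSne : (iotaMap ℰ A \ iotaMap ℰ B).Nonempty := by
    have hTne : ((iotaMap ℰ A \ iotaMap ℰ B) ∪ (iotaMap ℰ B \ iotaMap ℰ A)).Nonempty := by
      rw [Set.nonempty_iff_ne_empty]
      intro h
      apply heq
      rw [Set.union_empty_iff] at h
      exact subset_antisymm (fun D hD => by_contra fun h' =>
          (eq_empty_iff_forall_notMem.1 h.1 D) ⟨hD, h'⟩)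
        (fun D hD => by_contra fun h' =>
          (eq_empty_iff_forall_notMem.1 h.2 D) ⟨hD, h'⟩)
    obtain ⟨D, hD⟩ := hTne
    rcases hD with hD | hD
    · exact ⟨D, hD⟩
    · refine ⟨Dᶜ, ?_, ?_⟩
      · exact (iota_total hg hA hD.1.1).resolve_left hD.2
      · exact fun h => iota_not_both hg hB hD.1 h
  obtain ⟨C, hCS, hCmin⟩ := Set.Finite.exists_minimalFor id _
    (hTfin.subset subset_union_left) hSne
  simp only [id] at hCmin
  have hCE : C ∈ ℰ := hCS.1.1
  have hCcE : Cᶜ ∈ ℰ := hg.cpl C hCE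
  have hiCA : iotaMap ℰ C = iotaMap ℰ A :=
    iota_min_eq hg hA hB hCS.1 hCS.2 (fun D h1 h2 h3 => subset_antisymm h3 (hCmin ⟨h1, h2⟩ h3))
  have hCne : C ≠ Cᶜ := fun h =>
    (hg.proper C hCE).1 (sg_empty_of_subset_compl h.subset)
  have hadj : (treeGraph ℰ).Adj (vert hCE) (vert hCcE) := by
    refine ⟨?_, C, hCE, Or.inl ⟨rfl, rfl⟩⟩
    intro h
    have h1 : iotaMap ℰ C = iotaMap ℰ Cᶜ := congrArg Subtype.val h
    have h2 := self_mem_iota hCE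
    rw [h1] at h2
    exact not_mem_iota_compl hg hCE h2
  have hvac : vert hA = vert hCE := Subtype.ext hiCA.symm
  have hCcB : Cᶜ ∈ iotaMap ℰ B := (iota_total hg hB hCE).resolve_left hCS.2
  have hCcA : Cᶜ ∉ iotaMap ℰ A := fun h => iota_not_both hg hA hCS.1 h
  have hCiA : C ∈ iotaMap ℰ A := hCS.1
  have hCiB : C ∉ iotaMap ℰ B := hCS.2
  have hCcnotCc : C ∉ iotaMap ℰ Cᶜ := not_mem_iota_compl hg hCE
  have hTeq : (iotaMap ℰ Cᶜ \ iotaMap ℰ B) ∪ (iotaMap ℰ B \ iotaMap ℰ Cᶜ)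
      = ((iotaMap ℰ A \ iotaMap ℰ B) ∪ (iotaMap ℰ B \ iotaMap ℰ A)) \ {C, Cᶜ} := by
    ext D
    rw [iota_compl_eq hg hCE, hiCA]
    by_cases e1 : D = C
    · subst e1
      simp [hCne, hCiB]
    by_cases e2 : D = Cᶜ
    · subst e2
      simp [hCcB]
    · simp only [mem_union, mem_diff, mem_insert_iff, mem_singleton_iff, not_or, e1, e2,
        or_false, false_or, not_false_iff, and_true]
  have hpair : ({C, Cᶜ} : Set (Set V)) ⊆
      (iotaMap ℰ A \ iotaMap ℰ B) ∪ (iotaMap ℰ B \ iotaMap ℰ A) := by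
    intro D hD
    simp only [mem_insert_iff, mem_singleton_iff] at hD
    rcases hD with rfl | rfl
    · exact Or.inl hCS
    · exact Or.inr ⟨hCcB, hCcA⟩
  have h2le : 2 ≤ n := by
    rw [← hn, ← Set.ncard_pair hCne]
    exact Set.ncard_le_ncard hpair hTfin
  have hn' : ((iotaMap ℰ Cᶜ \ iotaMap ℰ B) ∪ (iotaMap ℰ B \ iotaMap ℰ Cᶜ)).ncard = n - 2 := by
    rw [hTeq, Set.ncard_diff hpair ((Set.finite_singleton Cᶜ).insert C), hn,
      Set.ncard_pair hCne]
  have hreach2 := IH (n - 2) (by omega) Cᶜ B hCcE hB hn'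
  rw [hvac]
  exact hadj.reachable.trans hreach2

lemma tree_conn (hg : GoodFam ℰ) (hne : ℰ.Nonempty) : (treeGraph ℰ).Connected := by
  obtain ⟨A, hA⟩ := hne
  rw [SimpleGraph.connected_iff]
  refine ⟨?_, ⟨vert hA⟩⟩
  intro α β
  obtain ⟨X, hX, hαX⟩ := α.2
  obtain ⟨Y, hY, hβY⟩ := β.2
  have h1 : α = vert hX := Subtype.ext hαX
  have h2 : β = vert hY := Subtype.ext hβY
  rw [h1, h2]
  exact reach hg _ X Y hX hY rfl

lemma adj_flip (hg : GoodFam ℰ) {x y : TreeVert ℰ} (hadj : (treeGraph ℰ).Adj x y)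
    {D : Set V} (hDx : D ∈ x.1) (hDy : D ∉ y.1) :
    x.1 = iotaMap ℰ D ∧ y.1 = iotaMap ℰ Dᶜ := by
  obtain ⟨-, E, hE, hc | hc⟩ := (hadj : x ≠ y ∧ ∃ A ∈ ℰ,
    (x.1 = iotaMap ℰ A ∧ y.1 = iotaMap ℰ Aᶜ) ∨ (y.1 = iotaMap ℰ A ∧ x.1 = iotaMap ℰ Aᶜ))
  · rw [hc.1] at hDx; rw [hc.2] at hDy
    have hDE : D = E := by
      by_contra hne
      by_cases h2 : D = Eᶜ
      · subst h2; exact compl_not_mem_iota hg hE hDx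
      · exact hDy ((mem_iota_compl_iff hg hE hne h2).2 hDx)
    subst hDE; exact ⟨hc.1, hc.2⟩
  · rw [hc.2] at hDx; rw [hc.1] at hDy
    have hDE : D = Eᶜ := by
      by_contra hne
      by_cases h2 : D = E
      · subst h2; exact not_mem_iota_compl hg hE hDx
      · exact hDy ((mem_iota_compl_iff hg hE h2 hne).1 hDx)
    subst hDE
    exact ⟨hc.2, by rw [hc.1, compl_compl]⟩

lemma walk_flip (hg : GoodFam ℰ) {u v : TreeVert ℰ} (w : (treeGraph ℰ).Walk u v) :
    ∀ D : Set V, ¬(D ∈ u.1 ↔ D ∈ v.1) →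
      ∃ x y : TreeVert ℰ, s(x, y) ∈ w.edges ∧ ¬(D ∈ x.1 ↔ D ∈ y.1) := by
  induction w with
  | nil => exact fun D h => absurd Iff.rfl h
  | @cons a b c h p ih =>
    intro D hD
    by_cases hm : D ∈ a.1 ↔ D ∈ b.1
    · obtain ⟨x, y, hxy, hnot⟩ := ih D (fun h' => hD (hm.trans h'))
      exact ⟨x, y, by rw [SimpleGraph.Walk.edges_cons]; exact List.mem_cons_of_mem _ hxy, hnot⟩
    · exact ⟨a, b, by rw [SimpleGraph.Walk.edges_cons]; exact List.mem_cons_self, hm⟩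

lemma tree_acyc (hg : GoodFam ℰ) : (treeGraph ℰ).IsAcyclic := by
  intro v c hc
  cases c with
  | nil => exact hc.ne_nil rfl
  | @cons _ u _ h p =>
    obtain ⟨D, hDE, hDv, hDu⟩ : ∃ D, D ∈ ℰ ∧ D ∈ v.1 ∧ D ∉ u.1 := by
      obtain ⟨-, E, hE, hc' | hc'⟩ := (h : v ≠ u ∧ ∃ A ∈ ℰ,
        (v.1 = iotaMap ℰ A ∧ u.1 = iotaMap ℰ Aᶜ) ∨ (u.1 = iotaMap ℰ A ∧ v.1 = iotaMap ℰ Aᶜ))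
      · exact ⟨E, hE, by rw [hc'.1]; exact self_mem_iota hE,
          by rw [hc'.2]; exact not_mem_iota_compl hg hE⟩
      · exact ⟨Eᶜ, hg.cpl E hE, by rw [hc'.2]; exact self_mem_iota (hg.cpl E hE),
          by rw [hc'.1]; exact compl_not_mem_iota hg hE⟩
    have hflip := adj_flip hg h hDv hDu
    obtain ⟨x, y, hxy, hnot⟩ := walk_flip hg p D (fun hiff => hDu (hiff.2 hDv))
    have hxyadj : (treeGraph ℰ).Adj x y := p.adj_of_mem_edges hxy
    have hedge : s(x, y) = s(v, u) := by
      by_cases hx : D ∈ x.1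
      · have hy : D ∉ y.1 := fun h' => hnot (iff_of_true hx h')
        obtain ⟨h1, h2⟩ := adj_flip hg hxyadj hx hy
        have e1 : x = v := Subtype.ext (h1.trans hflip.1.symm)
        have e2 : y = u := Subtype.ext (h2.trans hflip.2.symm)
        rw [e1, e2]
      · have hy : D ∈ y.1 := by
          by_contra h'
          exact hnot (iff_of_false hx h')
        obtain ⟨h1, h2⟩ := adj_flip hg hxyadj.symm hy hx
        have e1 : y = v := Subtype.ext (h1.trans hflip.1.symm)
        have e2 : x = u := Subtype.ext (h2.trans hflip.2.symm)
        rw [e1, e2, Sym2.eq_swap]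
    have hnodup := hc.edges_nodup
    rw [SimpleGraph.Walk.edges_cons] at hnodup
    exact (List.nodup_cons.1 hnodup).1 (hedge ▸ hxy)

end Aux

/-- if `ℰ` is a nonempty set of proper subsets, closed under complementation,
nested, and satisfying the finite interval condition, then the graph with directed edge set
`ℰ` and vertices the maps `ι(A)` is a tree. -/
theorem structure_graph_is_tree (ℰ : Set (Set V)) (hne : ℰ.Nonempty)
    (hproper : ∀ A ∈ ℰ, A ≠ ∅ ∧ A ≠ univ)
    (hcompl : ∀ A ∈ ℰ, Aᶜ ∈ ℰ)
    (hnested : ∀ A ∈ ℰ, ∀ B ∈ ℰ, Nested A B)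
    (hint : ∀ A ∈ ℰ, ∀ B ∈ ℰ, A ⊂ B → {C | C ∈ ℰ ∧ A ⊂ C ∧ C ⊂ B}.Finite) :
    (treeGraph ℰ).IsTree := by
  have hg : GoodFam ℰ := ⟨hproper, hcompl, hnested, hint⟩
  exact ⟨tree_conn hg hne, tree_acyc hg⟩
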